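/- arXiv:2003.02534 — 2 statements merged into one kernel-verified Lean document; each statement's English description precedes it below -/
import Mathlib

section
/- Let K be a number field and S a finite set of places containing all archimedean places and at least one nonarchimedean place ν ∈ S. Then the ring of S-integers O_S is dense in the completion K_ν. -/
open IsDedekindDomain
open scoped Multiplicative WithZero

open IsDedekindDomain.HeightOneSpectrum in
private lemma sInt_exists_ofAdd_neg_lt {δ : ℤᵐ⁰} (hδ : δ ≠ 0) :
    ∃ n : ℕ, (Multiplicative.ofAdd (-(n : ℤ)) : Multiplicative ℤ) < δ := by
  obtain ⟨d, rfl⟩ := WithZero.ne_zero_iff_exists.mp hδ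
  refine ⟨((-Multiplicative.toAdd d).toNat + 1), ?_⟩
  rw [WithZero.coe_lt_coe, ← Multiplicative.toAdd_lt, toAdd_ofAdd]
  omega

open IsDedekindDomain.HeightOneSpectrum in
private lemma sInt_exists_ofAdd_neg_le {δ : ℤᵐ⁰} (hδ : δ ≠ 0) :
    ∃ n : ℕ, (Multiplicative.ofAdd (-(n : ℤ)) : Multiplicative ℤ) ≤ δ :=
  (sInt_exists_ofAdd_neg_lt hδ).imp fun _ h => le_of_lt h

open IsDedekindDomain.HeightOneSpectrum in
private lemma sInt_approx {R : Type*} [CommRing R] [IsDedekindDomain R] {K : Type*}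
    [Field K] [Algebra R K] [IsFractionRing R K]
    (S : Set (HeightOneSpectrum R)) (v : HeightOneSpectrum R) (hv : v ∈ S)
    (x : K) (γ : ℤᵐ⁰ˣ) :
    ∃ y ∈ S.integer K, v.valuation K (x - y) < (γ : ℤᵐ⁰) := by
  by_cases hx : x = 0
  · exact ⟨0, Subalgebra.zero_mem _, by
      simpa [hx] using Units.zero_lt γ⟩
  -- write x = a / b
  obtain ⟨⟨a, b⟩, hab⟩ := IsLocalization.mk'_surjective (nonZeroDivisors R) x
  have hb0 : (b : R) ≠ 0 := nonZeroDivisors.coe_ne_zero b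
  have hspanb : (Ideal.span {(b : R)} : Ideal R) ≠ 0 := by
    simpa [Ne, Ideal.zero_eq_bot, Ideal.span_singleton_eq_bot] using hb0
  -- the finite set of primes dividing b, away from v
  have hTfin : {w : HeightOneSpectrum R | w.asIdeal ∣ Ideal.span {(b : R)}}.Finite :=
    Ideal.finite_factors hspanb
  classical
  set T : Finset (HeightOneSpectrum R) := hTfin.toFinset.erase v with hT
  -- choose exponent m at v
  have hvx : v.valuation K x ≠ 0 := (Valuation.ne_zero_iff _).mpr hx
  obtain ⟨m, hm⟩ := sInt_exists_ofAdd_neg_lt (δ := (γ : ℤᵐ⁰) / v.valuation K x)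
    (by simp [div_eq_mul_inv, hvx])
  have hm' : ((Multiplicative.ofAdd (-(m : ℤ)) : Multiplicative ℤ) : ℤᵐ⁰) * v.valuation K x < (γ : ℤᵐ⁰) := by
    rwa [lt_div_iff₀ (zero_lt_iff.mpr hvx)] at hm
  -- choose exponents at primes in T
  have hexp : ∀ w : HeightOneSpectrum R,
      ∃ n : ℕ, ((Multiplicative.ofAdd (-(n : ℤ)) : Multiplicative ℤ) : ℤᵐ⁰) ≤ w.intValuation b :=
    fun w => sInt_exists_ofAdd_neg_le (w.intValuation_ne_zero b hb0)
  choose n hn using hexp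
  -- CRT: find s ≡ 1 mod v^m, s ∈ w^(n w) for w ∈ T
  have hsup : v.asIdeal ^ m ⊔ (∏ w ∈ T, w.asIdeal ^ n w) = ⊤ := by
    rw [Ideal.sup_prod_eq_top]
    intro w hw
    have hne : v.asIdeal ≠ w.asIdeal := fun h => by
      exact (Finset.mem_erase.mp hw).1.symm (HeightOneSpectrum.ext h)
    exact Ideal.sup_pow_eq_top (Ideal.pow_sup_eq_top
      (Ideal.IsMaximal.coprime_of_ne (v.isPrime.isMaximal v.ne_bot)
        (w.isPrime.isMaximal w.ne_bot) hne))
  have h1 : (1 : R) ∈ v.asIdeal ^ m ⊔ (∏ w ∈ T, w.asIdeal ^ n w) := hsup ▸ Submodule.mem_top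
  obtain ⟨i, hi, s, hs, his⟩ := Submodule.mem_sup.mp h1
  -- key valuation facts about s
  have hs_sub : v.intValuation (s - 1) ≤ ((Multiplicative.ofAdd (-(m : ℤ)) : Multiplicative ℤ) : ℤᵐ⁰) := by
    refine (v.intValuation_le_pow_iff_dvd (s - 1) m).mpr (Ideal.dvd_span_singleton.mpr ?_)
    have : s - 1 = -i := by linear_combination his
    rw [this]
    exact neg_mem hi
  have hs_mem : ∀ w ∈ T, w.intValuation s ≤ ((Multiplicative.ofAdd (-(n w : ℤ)) : Multiplicative ℤ) : ℤᵐ⁰) := by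
    intro w hw
    exact (w.intValuation_le_pow_iff_dvd s (n w)).mpr (Ideal.dvd_span_singleton.mpr
      ((Ideal.le_of_dvd (Finset.dvd_prod_of_mem _ hw)) hs))
  refine ⟨algebraMap R K s * x, ?_, ?_⟩
  · -- membership in S-integers
    intro w hwS
    have hwv : w ≠ v := fun h => hwS (h ▸ hv)
    have hxval : w.valuation K x = w.intValuation a / w.intValuation b := by
      rw [← hab]; exact valuation_of_mk' (K := K) (v := w)
    rw [map_mul, valuation_of_algebraMap, hxval]
    by_cases hwT : w ∈ T
    · calc w.intValuation s * (w.intValuation a / w.intValuation b)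
          ≤ w.intValuation b * (w.intValuation a / w.intValuation b) := by
            gcongr
            exact le_trans (hs_mem w hwT) (hn w)
        _ = w.intValuation a := by
            have h' : w.intValuation (b : R) ≠ 0 := w.intValuation_ne_zero b hb0
            rw [mul_div_assoc', mul_comm, mul_div_assoc, div_self h', mul_one]
        _ ≤ 1 := w.intValuation_le_one a
    · have hwb : ¬ w.asIdeal ∣ Ideal.span {(b : R)} := by
        intro hdvd
        exact hwT (Finset.mem_erase.mpr ⟨hwv, hTfin.mem_toFinset.mpr hdvd⟩)
      have hb1 : w.intValuation (b : R) = 1 :=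
        le_antisymm (w.intValuation_le_one b)
          (not_lt.mp ((w.intValuation_lt_one_iff_dvd b).not.mpr hwb))
      rw [hb1, div_one]
      exact mul_le_one' (w.intValuation_le_one s) (w.intValuation_le_one a)
  · -- closeness at v
    have : x - algebraMap R K s * x = algebraMap R K (1 - s) * x := by
      rw [map_sub, map_one]; ring
    rw [this, map_mul, valuation_of_algebraMap]
    have h1s : v.intValuation (1 - s) ≤ ((Multiplicative.ofAdd (-(m : ℤ)) : Multiplicative ℤ) : ℤᵐ⁰) := by
      have : (1 : R) - s = -(s - 1) := by ring
      rw [this, Valuation.map_neg]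
      exact hs_sub
    calc v.intValuation (1 - s) * v.valuation K x
        ≤ ((Multiplicative.ofAdd (-(m : ℤ)) : Multiplicative ℤ) : ℤᵐ⁰) * v.valuation K x := by gcongr
      _ < (γ : ℤᵐ⁰) := hm'

theorem sInteger_dense_in_adicCompletion {K : Type*} [Field K] [NumberField K]
    (S : Finset (HeightOneSpectrum (NumberField.RingOfIntegers K)))
    (v : HeightOneSpectrum (NumberField.RingOfIntegers K)) (hv : v ∈ S) :
    DenseRange (fun x : (S : Set (HeightOneSpectrum (NumberField.RingOfIntegers K))).integer K =>
      algebraMap K (v.adicCompletion K) (x : K)) := by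
  intro z
  rw [mem_closure_iff_nhds]
  intro t ht
  obtain ⟨γ', hγ'⟩ := Valued.mem_nhds.mp ht
  set γ : ℤᵐ⁰ˣ := Units.map (MonoidWithZeroHom.toMonoidHom MonoidWithZeroHom.ValueGroup₀.embedding) γ'
  have hγ : {y : v.adicCompletion K | Valued.v (y - z) < (γ : ℤᵐ⁰)} ⊆ t := fun y hy =>
    hγ' ((Valuation.restrict_lt_iff_lt_embedding _).mpr hy)
  -- K is dense in its completion
  have hdense := HeightOneSpectrum.denseRange_algebraMap (K := K) (v := v)
  have hball : {y : v.adicCompletion K | Valued.v (y - z) < (γ : ℤᵐ⁰)} ∈ nhds z :=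
    Valued.mem_nhds.mpr ⟨γ', fun y hy => (Valuation.restrict_lt_iff_lt_embedding _).mp hy⟩
  obtain ⟨_, hk1, k, rfl⟩ := (mem_closure_iff_nhds.mp (hdense z)) _ hball
  obtain ⟨y, hy, hyk⟩ := sInt_approx (R := NumberField.RingOfIntegers K)
    (S : Set (HeightOneSpectrum (NumberField.RingOfIntegers K))) v hv k γ
  refine ⟨algebraMap K (v.adicCompletion K) y, hγ ?_, ⟨⟨y, hy⟩, rfl⟩⟩
  show Valued.v ((algebraMap K (v.adicCompletion K)) y - z) < (γ : ℤᵐ⁰)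
  have hk1' : Valued.v ((algebraMap K (v.adicCompletion K)) k - z) < (γ : ℤᵐ⁰) := hk1
  have hyk' : Valued.v ((algebraMap K (v.adicCompletion K)) y
      - (algebraMap K (v.adicCompletion K)) k) < (γ : ℤᵐ⁰) := by
    rw [← RingHom.map_sub]
    have h2 : Valued.v ((algebraMap K (v.adicCompletion K)) (y - k)) = v.valuation K (y - k) :=
      HeightOneSpectrum.adicCompletion.valued_coe (K := K) (v := v) (y - k)
    rw [h2, Valuation.map_sub_swap]
    exact hyk
  have h3 := Valuation.map_add_lt Valued.v hyk' hk1'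
  rwa [sub_add_sub_cancel] at h3
end

section
/- Let K be a number field, S a finite set of places containing all archimedean places and at least one nonarchimedean place ν ∈ S, and let A ≤ O_S be a finite-index additive subgroup of the ring of S-integers. Then A is dense in the completion K_ν. -/
open IsDedekindDomain

open IsDedekindDomain.HeightOneSpectrum Multiplicative in
/-- Key approximation lemma: every element of `K` can be approximated `v`-adically
by `S`-integers, when `v ∈ S`. -/
theorem aux_exists_sInteger_close {K : Type*} [Field K] [NumberField K]
    (S : Finset (HeightOneSpectrum (NumberField.RingOfIntegers K)))
    (v : HeightOneSpectrum (NumberField.RingOfIntegers K)) (hv : v ∈ S) (x : K)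
    (γ : (WithZero (Multiplicative ℤ))ˣ) :
    ∃ y : K, y ∈ (S : Set (HeightOneSpectrum (NumberField.RingOfIntegers K))).integer K ∧
      v.valuation K (x - y) < γ := by
  classical
  set R := NumberField.RingOfIntegers K
  obtain ⟨a, b, hb, rfl⟩ := IsFractionRing.div_surjective (A := R) x
  have hb0 : b ≠ 0 := nonZeroDivisors.ne_zero hb
  -- exponents of b at each prime
  have hval : ∀ w : HeightOneSpectrum R, ∃ m : ℕ,
      w.intValuation b = (Multiplicative.ofAdd (-(m : ℤ)) : Multiplicative ℤ) := by
    intro w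
    have h0 : w.intValuation b ≠ 0 := by
      rw [intValuation_apply]
      exact w.intValuation_ne_zero b hb0
    obtain ⟨u, hu⟩ := WithZero.ne_zero_iff_exists.mp h0
    have h1 : w.intValuation b ≤ 1 := by
      rw [intValuation_apply]; exact w.intValuation_le_one b
    rw [← hu] at h1 ⊢
    rw [show (1 : WithZero (Multiplicative ℤ)) = ((1 : Multiplicative ℤ) : WithZero (Multiplicative ℤ)) from rfl,
      WithZero.coe_le_coe] at h1
    refine ⟨(-u.toAdd).toNat, ?_⟩
    have hle : u.toAdd ≤ 0 := h1
    have : (-(((-u.toAdd).toNat : ℕ) : ℤ)) = u.toAdd := by omega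
    rw [this, ofAdd_toAdd]
  choose m hm using hval
  -- the target accuracy
  obtain ⟨g, hg⟩ := WithZero.ne_zero_iff_exists.mp γ.ne_zero
  set M : ℕ := m v + 1 + (-g.toAdd).toNat with hM
  -- the relevant finite set of primes
  have hspan : Ideal.span {b} ≠ (0 : Ideal R) := by
    simp [Ideal.zero_eq_bot, Ideal.span_singleton_eq_bot, hb0]
  set s : Finset (HeightOneSpectrum R) :=
    (Ideal.finite_factors hspan).toFinset ∪ {v} with hs
  have hvs : v ∈ s := Finset.mem_union_right _ (Finset.mem_singleton_self v)
  -- CRT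
  obtain ⟨c, hc⟩ := IsDedekindDomain.exists_forall_sub_mem_ideal (s := s)
    (fun w => w.asIdeal) (fun w => if w = v then M else m w)
    (fun w _ => w.prime)
    (fun w _ w' _ hne h => hne (HeightOneSpectrum.ext h))
    (fun w => if (w : HeightOneSpectrum R) = v then a else 0)
  have hcv : c - a ∈ v.asIdeal ^ M := by simpa using hc v hvs
  have hcw : ∀ w ∈ s, w ≠ v → c ∈ w.asIdeal ^ (m w) := by
    intro w hws hwv
    have := hc w hws
    simp only [if_neg hwv, sub_zero] at this
    exact this
  refine ⟨algebraMap R K c / algebraMap R K b, ?_, ?_⟩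
  · -- the candidate is an S-integer
    intro w hw
    have hwv : w ≠ v := fun h => hw (h ▸ hv)
    have hbne : w.intValuation b ≠ 0 := by
      rw [intValuation_apply]; exact w.intValuation_ne_zero b hb0
    rw [map_div₀, valuation_of_algebraMap, valuation_of_algebraMap]
    rw [div_le_one₀ (lt_of_le_of_ne (zero_le') (Ne.symm hbne))]
    by_cases hdvd : w.asIdeal ∣ Ideal.span {b}
    · have hws : w ∈ s := Finset.mem_union_left _ (by
        rw [Set.Finite.mem_toFinset]; exact hdvd)
      have hcmem := hcw w hws hwv
      rw [hm w]; change _ ≤ WithZero.exp _; rw [intValuation_le_pow_iff_dvd]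
      exact Ideal.dvd_span_singleton.mpr hcmem
    · have h1 : w.intValuation b = 1 := by
        have hle : w.intValuation b ≤ 1 := by
          rw [intValuation_apply]; exact w.intValuation_le_one b
        rcases lt_or_eq_of_le hle with hlt | heq
        · exfalso
          apply hdvd
          rw [intValuation_apply] at hlt
          exact (w.intValuation_lt_one_iff_dvd b).mp hlt
        · exact heq
      rw [h1, intValuation_apply]
      exact w.intValuation_le_one c
  · -- the candidate is close to x
    rw [div_sub_div_same, ← map_sub]
    rw [map_div₀, valuation_of_algebraMap, valuation_of_algebraMap]
    have hac : v.intValuation (a - c) ≤ (Multiplicative.ofAdd (-(M : ℤ)) : Multiplicative ℤ) := by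
      change _ ≤ WithZero.exp _; rw [intValuation_le_pow_iff_dvd]
      refine Ideal.dvd_span_singleton.mpr ?_
      have := (v.asIdeal ^ M).neg_mem hcv
      simpa using this
    calc v.intValuation (a - c) / v.intValuation b
        ≤ ((Multiplicative.ofAdd (-(M : ℤ)) : Multiplicative ℤ) : WithZero (Multiplicative ℤ)) /
            v.intValuation b := by
          rw [div_eq_mul_inv, div_eq_mul_inv]
          exact mul_le_mul_left hac _
      _ = ((Multiplicative.ofAdd ((m v : ℤ) - (M : ℤ)) : Multiplicative ℤ) :
            WithZero (Multiplicative ℤ)) := by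
          rw [hm v, ← WithZero.coe_div]
          congr 1
          rw [← ofAdd_sub]
          congr 1
          ring
      _ < (γ : WithZero (Multiplicative ℤ)) := by
          rw [← hg, WithZero.coe_lt_coe, ← Multiplicative.toAdd_lt, toAdd_ofAdd]
          have : (0 : ℤ) ≤ (-g.toAdd).toNat := Int.natCast_nonneg _
          omega

open IsDedekindDomain.HeightOneSpectrum in
/-- The `S`-integers are dense in the `v`-adic completion when `v ∈ S`. -/
theorem aux_dense_sInteger {K : Type*} [Field K] [NumberField K]
    (S : Finset (HeightOneSpectrum (NumberField.RingOfIntegers K)))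
    (v : HeightOneSpectrum (NumberField.RingOfIntegers K)) (hv : v ∈ S) :
    DenseRange (fun y : (S : Set (HeightOneSpectrum (NumberField.RingOfIntegers K))).integer K =>
      algebraMap K (v.adicCompletion K) (y : K)) := by
  have hK : ∀ k : K, (algebraMap K (v.adicCompletion K) k) ∈
      closure (Set.range (fun y : (S : Set (HeightOneSpectrum (NumberField.RingOfIntegers K))).integer K =>
        algebraMap K (v.adicCompletion K) (y : K))) := by
    intro k
    rw [mem_closure_iff_nhds]
    intro U hU
    obtain ⟨γ, hγ⟩ := Valued.mem_nhds.mp hU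
    obtain ⟨y, hymem, hyval⟩ := aux_exists_sInteger_close S v hv k
      (Units.map (MonoidWithZeroHom.ValueGroup₀.embedding (f := (.ofClass (Valued.v : Valuation (v.adicCompletion K) (WithZero (Multiplicative ℤ)))))) γ)
    refine ⟨algebraMap K (v.adicCompletion K) y, ?_, ⟨⟨y, hymem⟩, rfl⟩⟩
    apply hγ
    rw [Set.mem_setOf_eq, Valuation.restrict_lt_iff_lt_embedding]
    change Valued.v (algebraMap K (v.adicCompletion K) y - algebraMap K (v.adicCompletion K) k) < MonoidWithZeroHom.ValueGroup₀.embedding γ.1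
    rw [show algebraMap K (v.adicCompletion K) y - algebraMap K (v.adicCompletion K) k
        = algebraMap K (v.adicCompletion K) (y - k) from
      ((algebraMap K (v.adicCompletion K)).map_sub y k).symm]
    have : Valued.v (algebraMap K (v.adicCompletion K) (y - k)) = v.valuation K (y - k) :=
      valuedAdicCompletion_eq_valuation' v (y - k)
    rw [this, Valuation.map_sub_swap]
    exact hyval
  intro z
  have hdense : DenseRange ((↑) : K → v.adicCompletion K) :=
    IsDedekindDomain.HeightOneSpectrum.denseRange_algebraMap (K := K) (v := v)
  have hsub : Set.range ((↑) : K → v.adicCompletion K) ⊆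
      closure (Set.range (fun y : (S : Set (HeightOneSpectrum (NumberField.RingOfIntegers K))).integer K =>
        algebraMap K (v.adicCompletion K) (y : K))) := by
    rintro _ ⟨k, rfl⟩
    exact hK k
  have := closure_mono hsub (hdense z)
  rwa [closure_closure] at this

theorem finite_index_subgroup_dense_in_adicCompletion {K : Type*} [Field K] [NumberField K]
    (S : Finset (HeightOneSpectrum (NumberField.RingOfIntegers K)))
    (v : HeightOneSpectrum (NumberField.RingOfIntegers K)) (hv : v ∈ S)
    (A : AddSubgroup ((S : Set (HeightOneSpectrum (NumberField.RingOfIntegers K))).integer K))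
    (hA : A.index ≠ 0) :
    DenseRange (fun x : A =>
      algebraMap K (v.adicCompletion K) ((x : (S : Set (HeightOneSpectrum (NumberField.RingOfIntegers K))).integer K) : K)) := by
  classical
  set Kv := v.adicCompletion K
  set n := A.index with hn
  haveI : CharZero Kv := charZero_of_injective_algebraMap (algebraMap K Kv).injective
  have hn0 : (n : Kv) ≠ 0 := Nat.cast_ne_zero.mpr hA
  set T := closure (Set.range (fun x : A =>
    algebraMap K Kv ((x : (S : Set (HeightOneSpectrum (NumberField.RingOfIntegers K))).integer K) : K))) with hT
  have hsub : Set.range (fun y : (S : Set (HeightOneSpectrum (NumberField.RingOfIntegers K))).integer K =>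
      algebraMap K Kv (y : K)) ⊆ (fun t : Kv => (n : Kv) * t) ⁻¹' T := by
    rintro _ ⟨y, rfl⟩
    have hmem : n • y ∈ A := AddSubgroup.nsmul_index_mem A y
    refine subset_closure ⟨⟨n • y, hmem⟩, ?_⟩
    show algebraMap K Kv ((n • y : _) : K) = (n : Kv) * algebraMap K Kv (y : K)
    have : ((n • y : (S : Set (HeightOneSpectrum (NumberField.RingOfIntegers K))).integer K) : K)
        = (n : K) * (y : K) := by
      push_cast
      rw [nsmul_eq_mul]
    rw [this, (algebraMap K Kv).map_mul, map_natCast]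
  have hclosed : IsClosed ((fun t : Kv => (n : Kv) * t) ⁻¹' T) :=
    isClosed_closure.preimage (continuous_const.mul continuous_id)
  have hpre : ∀ t : Kv, (n : Kv) * t ∈ T := by
    intro t
    have hd := aux_dense_sInteger S v hv
    have : closure (Set.range (fun y : (S : Set (HeightOneSpectrum (NumberField.RingOfIntegers K))).integer K =>
        algebraMap K Kv (y : K))) ⊆ (fun t : Kv => (n : Kv) * t) ⁻¹' T :=
      closure_minimal hsub hclosed
    exact this (hd t)
  intro z
  have := hpre ((n : Kv)⁻¹ * z)
  rwa [← mul_assoc, mul_inv_cancel₀ hn0, one_mul] at this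
end
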